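/- arXiv:2503.17088 — 3 statements merged into one kernel-verified Lean document; each statement's English description precedes it below -/
import Mathlib

section
/- For all real t with |t| < 1/4, exp(−t)/√(1−2t) ≤ exp(2t²). -/
/-- For all real `t` with `|t| < 1/4`, `exp(-t)/√(1-2t) ≤ exp(2t²)`. -/
theorem stmt_1 (t : ℝ) (ht : |t| < 1/4) :
    Real.exp (-t) / Real.sqrt (1 - 2*t) ≤ Real.exp (2 * t^2) := by
  obtain ⟨h1, h2⟩ := abs_lt.mp ht
  have hpos : (0:ℝ) < 1 - 2*t := by linarith
  have key : Real.exp (-(2*t + 4*t^2)) ≤ 1 - 2*t := by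
    have hx : (0:ℝ) < 1 + (2*t + 4*t^2) := by nlinarith
    rcases le_or_gt t 0 with h | h
    · have he := Real.add_one_le_exp (2*t + 4*t^2)
      have hep : 0 < Real.exp (2*t + 4*t^2) := Real.exp_pos _
      rw [Real.exp_neg, inv_le_iff_one_le_mul₀ hep]
      nlinarith [mul_le_mul_of_nonneg_left he hpos.le]
    · have hq := Real.quadratic_le_exp_of_nonneg (by nlinarith : (0:ℝ) ≤ 2*t + 4*t^2)
      have hep : 0 < Real.exp (2*t + 4*t^2) := Real.exp_pos _
      rw [Real.exp_neg, inv_le_iff_one_le_mul₀ hep]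
      nlinarith [mul_le_mul_of_nonneg_left hq hpos.le]
  have hs : Real.exp (-t - 2*t^2) ≤ Real.sqrt (1 - 2*t) := by
    rw [show (1:ℝ) - 2*t = Real.sqrt (1-2*t) ^ 2 from (Real.sq_sqrt hpos.le).symm] at key
    have := Real.sqrt_nonneg (1 - 2*t)
    nlinarith [Real.exp_pos (-t - 2*t^2),
      (Real.exp_add (-t - 2*t^2) (-t - 2*t^2)).symm.trans
        (by ring_nf : Real.exp (-t - 2*t^2 + (-t - 2*t^2)) = Real.exp (-(2*t + 4*t^2)))]
  have hsq : 0 < Real.sqrt (1 - 2*t) := Real.sqrt_pos.mpr hpos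
  rw [div_le_iff₀ hsq]
  calc Real.exp (-t) = Real.exp (2*t^2) * Real.exp (-t - 2*t^2) := by
        rw [← Real.exp_add]; ring_nf
    _ ≤ Real.exp (2*t^2) * Real.sqrt (1 - 2*t) :=
        mul_le_mul_of_nonneg_left hs (Real.exp_pos _).le
end

section
/- Let x₁,…,x_n be i.i.d. chi-squared random variables with 2L degrees of freedom and let λ₁,…,λ_n be nonnegative reals with λ_max = max_i λ_i. Then for every δ > 0, P[ Σ_{i=1}^n ( (λ_i/2) x_i − L λ_i ) ≥ nLδ ] ≤ exp( − min{ (nLδ)²/(4L Σ_i λ_i²), nLδ/(4 λ_max) } ). -/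
open MeasureTheory ProbabilityTheory

/-- The chi-squared distribution with `k` degrees of freedom, as the Gamma distribution with
shape `k/2` and rate `1/2`. -/
noncomputable def chiSqMeasure (k : ℕ) : Measure ℝ :=
  gammaMeasure ((k : ℝ) / 2) (1 / 2)

section auxlemmas
open Real
open scoped ENNReal NNReal

lemma key_exp {v : ℝ} (h0 : 0 ≤ v) (h1 : v ≤ 1/2) :
    Real.exp (-(v + v^2)) ≤ 1 - v := by
  set u := v + v^2 with hu
  have hu0 : 0 ≤ u := by positivity
  have hu1 : u ≤ 3/4 := by nlinarith
  have habs : |(-u)| ≤ 1 := by rw [abs_neg, abs_of_nonneg hu0]; linarith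
  have hb := Real.exp_bound habs (n := 5) (by norm_num)
  rw [abs_neg, abs_of_nonneg hu0] at hb
  have hsum : ∑ m ∈ Finset.range 5, (-u) ^ m / m.factorial
      = 1 - u + u^2/2 - u^3/6 + u^4/24 := by
    simp [Finset.sum_range_succ, Nat.factorial]
    ring
  rw [hsum] at hb
  have h2 : Real.exp (-u) ≤ 1 - u + u^2/2 - u^3/6 + u^4/24 + u^5 * (1/100) := by
    have h5 : ((5:ℕ).succ : ℝ) / ((5:ℕ).factorial * (5:ℕ)) = 1/100 := by
      norm_num [Nat.factorial]
    rw [h5] at hb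
    have := (abs_sub_le_iff.1 hb).1
    linarith
  have hcube : (0:ℝ) ≤ u^3 := pow_nonneg hu0 3
  have h3 : u^4 ≤ (3/4)*u^3 := by
    have := mul_le_mul_of_nonneg_right hu1 hcube
    calc u^4 = u * u^3 := by ring
    _ ≤ (3/4) * u^3 := this
  have h4 : u^5 ≤ (9/16)*u^3 := by
    have hsq : u^2 ≤ 9/16 := by nlinarith
    have := mul_le_mul_of_nonneg_right hsq hcube
    calc u^5 = u^2 * u^3 := by ring
    _ ≤ (9/16) * u^3 := this
  have hkey : v^2 - u^2/2 + (623/4800)*u^3 ≥ 0 := by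
    rw [hu]
    nlinarith [sq_nonneg v, mul_nonneg h0 h0, pow_nonneg h0 3, pow_nonneg h0 4,
      mul_nonneg (mul_nonneg h0 h0) (sub_nonneg.2 h1),
      mul_nonneg (mul_nonneg (mul_nonneg h0 h0) h0) (sub_nonneg.2 h1),
      mul_nonneg (mul_nonneg (mul_nonneg (mul_nonneg h0 h0) h0) h0) (sub_nonneg.2 h1)]
  refine h2.trans ?_
  nlinarith [hkey, h3, h4]

lemma gammaPDF_measurable (a r : ℝ) : Measurable (gammaPDF a r) :=
  (measurable_gammaPDFReal a r).ennreal_ofReal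

lemma gamma_aux {a r s : ℝ} (ha : 0 < a) (hs : s < r) :
    IntegrableOn (fun x : ℝ => x ^ (a-1) * Real.exp (-((r - s) * x))) (Set.Ioi 0) := by
  have h := integrableOn_rpow_mul_exp_neg_mul_rpow (p := 1) (s := a-1) (b := r-s)
    (by linarith) zero_lt_one (by linarith)
  refine h.congr_fun (fun x hx => ?_) measurableSet_Ioi
  beta_reduce
  rw [rpow_one, neg_mul]

lemma exp_mul_gammaPDF_eq {a r : ℝ} (s : ℝ) (ha : 0 < a) (hr : 0 < r) :
    (fun x : ℝ => Real.exp (s * x) * (gammaPDF a r x).toReal)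
      = Set.indicator (Set.Ici 0)
        (fun x : ℝ => r ^ a / Real.Gamma a * (x ^ (a-1) * Real.exp (-((r - s) * x)))) := by
  funext x
  rw [gammaPDF, ENNReal.toReal_ofReal (gammaPDFReal_nonneg ha hr x)]
  rcases le_or_gt 0 x with hx | hx
  · rw [Set.indicator_of_mem (Set.mem_Ici.mpr hx), gammaPDFReal, if_pos hx,
      show -((r-s)*x) = -(r*x) + s*x by ring, Real.exp_add]
    ring
  · rw [Set.indicator_of_notMem (by simpa using hx), gammaPDFReal, if_neg (by linarith)]
    ring

lemma integrable_exp_gamma {a r s : ℝ} (ha : 0 < a) (hr : 0 < r) (hs : s < r) :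
    Integrable (fun x => Real.exp (s * x)) (gammaMeasure a r) := by
  rw [gammaMeasure, integrable_withDensity_iff (gammaPDF_measurable a r)
    (ae_of_all _ fun x => ENNReal.ofReal_lt_top)]
  rw [exp_mul_gammaPDF_eq s ha hr, integrable_indicator_iff measurableSet_Ici,
    integrableOn_Ici_iff_integrableOn_Ioi]
  exact (gamma_aux ha hs).const_mul _

lemma integral_exp_gamma {a r s : ℝ} (ha : 0 < a) (hr : 0 < r) (hs : s < r) :
    ∫ x, Real.exp (s * x) ∂(gammaMeasure a r) = (r / (r - s)) ^ a := by
  have hrs : 0 < r - s := by linarith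
  have hmeas : Measurable (fun x : ℝ => (gammaPDFReal a r x).toNNReal) :=
    (measurable_gammaPDFReal a r).real_toNNReal
  have hd : gammaPDF a r = fun x => ((gammaPDFReal a r x).toNNReal : ℝ≥0∞) := rfl
  rw [gammaMeasure, hd, integral_withDensity_eq_integral_smul hmeas]
  have heq : (fun x : ℝ => (gammaPDFReal a r x).toNNReal • Real.exp (s * x))
      = fun x => Real.exp (s * x) * (gammaPDF a r x).toReal := by
    funext x
    simp only [NNReal.smul_def, smul_eq_mul]
    rw [Real.coe_toNNReal _ (gammaPDFReal_nonneg ha hr x), mul_comm]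
    congr 1
    exact (ENNReal.toReal_ofReal (gammaPDFReal_nonneg ha hr x)).symm
  rw [heq, exp_mul_gammaPDF_eq s ha hr, integral_indicator measurableSet_Ici,
    integral_Ici_eq_integral_Ioi, integral_const_mul,
    integral_rpow_mul_exp_neg_mul_Ioi ha hrs, div_rpow hr.le hrs.le,
    div_rpow zero_le_one hrs.le, one_rpow]
  field_simp [(Real.Gamma_pos_of_pos ha).ne']

section auxtwo
variable {Ω : Type*} [MeasurableSpace Ω] (μpr : Measure Ω) [IsProbabilityMeasure μpr]

lemma chiSq_two_mul (L : ℕ) : chiSqMeasure (2*L) = gammaMeasure (L:ℝ) (1/2) := by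
  rw [chiSqMeasure]
  norm_num

variable {μpr}

lemma integrable_exp_comp {X : Ω → ℝ} (hX : Measurable X) {L : ℕ} (hL : 1 ≤ L)
    (hd : μpr.map X = chiSqMeasure (2*L)) {s : ℝ} (hs : s < 1/2) :
    Integrable (fun ω => Real.exp (s * X ω)) μpr := by
  have hg : Measurable (fun y : ℝ => Real.exp (s * y)) :=
    (measurable_const.mul measurable_id).exp
  have h := integrable_exp_gamma (a := (L:ℝ)) (r := 1/2) (s := s)
    (by exact_mod_cast Nat.succ_le_iff.mp hL) (by norm_num) hs
  rw [← chiSq_two_mul, ← hd] at h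
  exact (integrable_map_measure hg.aestronglyMeasurable hX.aemeasurable).mp h

lemma mgf_comp_chiSq {X : Ω → ℝ} (hX : Measurable X) {L : ℕ} (hL : 1 ≤ L)
    (hd : μpr.map X = chiSqMeasure (2*L)) {s : ℝ} (hs : s < 1/2) :
    mgf X μpr s = ((1/2) / ((1/2) - s)) ^ (L:ℝ) := by
  have hg : Measurable (fun y : ℝ => Real.exp (s * y)) :=
    (measurable_const.mul measurable_id).exp
  have : mgf X μpr s = ∫ y, Real.exp (s * y) ∂(μpr.map X) :=
    (integral_map hX.aemeasurable hg.aestronglyMeasurable).symm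
  rw [this, hd, chiSq_two_mul]
  exact integral_exp_gamma (by exact_mod_cast Nat.succ_le_iff.mp hL) (by norm_num) hs

end auxtwo

/-- Chernoff bound: if `x₁, …, x_n` are i.i.d. `χ²(2L)` random variables and `λ_i ≥ 0` with
maximum `λ_max`, then for every `δ > 0`,
`P[Σ_i ((λ_i/2) x_i - L λ_i) ≥ nLδ] ≤ exp(-min{(nLδ)²/(4L Σ_i λ_i²), nLδ/(4λ_max)})`. -/
theorem stmt_3 {Ω : Type*} [MeasurableSpace Ω] (μpr : Measure Ω) [IsProbabilityMeasure μpr]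
    (n L : ℕ) (hn : 1 ≤ n) (hL : 1 ≤ L)
    (x : Fin n → Ω → ℝ) (hmeas : ∀ i, Measurable (x i))
    (hindep : iIndepFun x μpr)
    (hdist : ∀ i, μpr.map (x i) = chiSqMeasure (2 * L))
    (lam : Fin n → ℝ) (hlam : ∀ i, 0 ≤ lam i)
    (lmax : ℝ) (hlmax : IsGreatest (Set.range lam) lmax)
    (δ : ℝ) (hδ : 0 < δ) :
    μpr {ω | (n : ℝ) * L * δ ≤ ∑ i, (lam i / 2 * x i ω - L * lam i)} ≤
      ENNReal.ofReal (Real.exp (-(min (((n : ℝ) * L * δ)^2 / (4 * L * ∑ i, (lam i)^2))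
        ((n : ℝ) * L * δ / (4 * lmax))))) := by
  obtain ⟨⟨i₀, hi₀⟩, hub⟩ := hlmax
  have hub' : ∀ i, lam i ≤ lmax := fun i => hub ⟨i, rfl⟩
  have hlmax0 : 0 ≤ lmax := hi₀ ▸ hlam i₀
  set a : ℝ := (n : ℝ) * L * δ with ha_def
  have hLpos : (0:ℝ) < L := by exact_mod_cast Nat.succ_le_iff.mp hL
  have ha : 0 < a := by
    have : (0:ℝ) < n := by exact_mod_cast Nat.succ_le_iff.mp hn
    positivity
  rcases eq_or_lt_of_le hlmax0 with hz | hlmaxpos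
  · -- degenerate: all lam = 0
    have hall : ∀ i, lam i = 0 := fun i => le_antisymm (hz ▸ hub' i) (hlam i)
    have : {ω | a ≤ ∑ i, (lam i / 2 * x i ω - (L:ℝ) * lam i)} = ∅ := by
      ext ω
      simp only [Set.mem_setOf_eq, Set.mem_empty_iff_false, iff_false, not_le]
      have : ∑ i, (lam i / 2 * x i ω - (L:ℝ) * lam i) = 0 := by
        apply Finset.sum_eq_zero; intro i _; rw [hall i]; ring
      rw [this]; exact ha
    rw [this]
    simp
  · -- main case
    have hsum2 : 0 < ∑ i, (lam i)^2 := by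
      have : (0:ℝ) < (lam i₀)^2 := by rw [hi₀]; positivity
      apply Finset.sum_pos' (fun i _ => sq_nonneg _) ⟨i₀, Finset.mem_univ _, this⟩
    set s : ℝ := (L : ℝ) * ∑ i, (lam i)^2 with hs_def
    have hspos : 0 < s := by positivity
    set t : ℝ := min (a / (2*s)) (1 / (2*lmax)) with ht_def
    have htpos : 0 < t := lt_min (by positivity) (by positivity)
    have htlam : ∀ i, t * lam i ≤ 1/2 := by
      intro i
      calc t * lam i ≤ (1/(2*lmax)) * lam i :=
            mul_le_mul_of_nonneg_right (min_le_right _ _) (hlam i)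
        _ ≤ (1/(2*lmax)) * lmax := mul_le_mul_of_nonneg_left (hub' i) (by positivity)
        _ = 1/2 := by field_simp
    set Y : Fin n → Ω → ℝ := fun i ω => lam i / 2 * x i ω - (L:ℝ) * lam i with hY_def
    have hYmeas : ∀ i, Measurable (Y i) :=
      fun i => ((hmeas i).const_mul _).sub measurable_const
    have hYindep : iIndepFun Y μpr := by
      have := hindep.comp (fun i (y : ℝ) => lam i / 2 * y - (L:ℝ) * lam i)
        (fun i => (measurable_id.const_mul _).sub measurable_const)
      exact this
    have hYint : ∀ i, Integrable (fun ω => Real.exp (t * Y i ω)) μpr := by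
      intro i
      have h1 : Integrable (fun ω => Real.exp ((t * lam i / 2) * x i ω)) μpr :=
        integrable_exp_comp (hmeas i) hL (hdist i)
          (by have := htlam i; linarith)
      have heq : (fun ω => Real.exp (t * Y i ω))
          = fun ω => Real.exp ((t * lam i / 2) * x i ω) * Real.exp (-(t * ((L:ℝ) * lam i))) := by
        funext ω
        rw [← Real.exp_add, hY_def]
        ring_nf
      rw [heq]
      exact h1.mul_const _
    -- mgf bound per coordinate
    have hmgfY : ∀ i, mgf (Y i) μpr t ≤ Real.exp ((L:ℝ) * (t * lam i)^2) := by
      intro i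
      set v : ℝ := t * lam i with hv_def
      have hv0 : 0 ≤ v := mul_nonneg htpos.le (hlam i)
      have hv1 : v ≤ 1/2 := htlam i
      have h1v : 0 < 1 - v := by linarith
      have hmg : mgf (Y i) μpr t
          = mgf (x i) μpr (t * lam i / 2) * Real.exp (-(t * ((L:ℝ) * lam i))) := by
        rw [mgf, mgf]
        rw [← integral_mul_const]
        congr 1
        funext ω
        rw [← Real.exp_add, hY_def]
        ring_nf
      rw [hmg, mgf_comp_chiSq (hmeas i) hL (hdist i) (by linarith : t * lam i / 2 < 1/2)]
      have hbase : Real.exp (-v) * (1 / (1-v)) ≤ Real.exp (v^2) := by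
        rw [mul_one_div, div_le_iff₀ h1v]
        have := key_exp hv0 hv1
        calc Real.exp (-v) = Real.exp (-(v + v^2)) * Real.exp (v^2) := by
              rw [← Real.exp_add]; ring_nf
          _ ≤ (1 - v) * Real.exp (v^2) := by
              exact mul_le_mul_of_nonneg_right this (Real.exp_pos _).le
          _ = Real.exp (v^2) * (1 - v) := by ring
      have hquot : (1/2) / ((1/2) - t * lam i / 2) = 1 / (1 - v) := by
        rw [hv_def]
        rw [div_eq_div_iff (by rw [← hv_def]; linarith) (by rw [← hv_def]; linarith)]
        ring
      rw [hquot, Real.rpow_natCast]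
      have hpow := pow_le_pow_left₀ (by positivity) hbase L
      rw [mul_pow, ← Real.exp_nat_mul, ← Real.exp_nat_mul] at hpow
      calc (1 / (1-v)) ^ L * Real.exp (-(t * ((L:ℝ) * lam i)))
          = Real.exp ((L:ℝ) * (-v)) * (1 / (1-v)) ^ L := by
            rw [hv_def]; ring_nf
        _ ≤ Real.exp ((L:ℝ) * v^2) := hpow
        _ = Real.exp ((L:ℝ) * (t * lam i)^2) := by rw [hv_def]
    -- Chernoff
    have hchern := measure_ge_le_exp_mul_mgf (μ := μpr) (X := ∑ i, Y i) a htpos.le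
      (hYindep.integrable_exp_mul_sum hYmeas (fun i _ => hYint i))
    have hset : {ω | a ≤ ∑ i, (lam i / 2 * x i ω - (L:ℝ) * lam i)}
        = {ω | a ≤ (∑ i, Y i) ω} := by
      ext ω
      simp [hY_def, Finset.sum_apply]
    have hmgfsum : mgf (∑ i, Y i) μpr t ≤ Real.exp (t^2 * s) := by
      rw [hYindep.mgf_sum hYmeas]
      calc ∏ i, mgf (Y i) μpr t ≤ ∏ i, Real.exp ((L:ℝ) * (t * lam i)^2) :=
            Finset.prod_le_prod (fun i _ => mgf_nonneg) (fun i _ => hmgfY i)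
        _ = Real.exp (∑ i, (L:ℝ) * (t * lam i)^2) := by rw [Real.exp_sum]
        _ = Real.exp (t^2 * s) := by
            congr 1
            rw [hs_def, Finset.mul_sum]
            rw [Finset.mul_sum]
            apply Finset.sum_congr rfl
            intro i _
            ring
    have hopt : Real.exp (-t * a) * Real.exp (t^2 * s)
        ≤ Real.exp (-(min (a^2 / (4 * L * ∑ i, (lam i)^2)) (a / (4 * lmax)))) := by
      rw [← Real.exp_add, Real.exp_le_exp]
      have hmin : a^2 / (4 * L * ∑ i, (lam i)^2) = a^2 / (4 * s) := by
        rw [hs_def]; ring_nf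
      rw [hmin]
      rcases le_total (a / (2*s)) (1 / (2*lmax)) with hc | hc
      · have ht : t = a / (2*s) := min_eq_left hc
        have : -t * a + t^2 * s = -(a^2 / (4*s)) := by
          rw [ht]; field_simp; ring
        rw [this]
        exact neg_le_neg (min_le_left _ _)
      · have ht : t = 1 / (2*lmax) := min_eq_right hc
        have hsa : s ≤ a * lmax := by
          rw [div_le_div_iff₀ (by positivity) (by positivity)] at hc
          nlinarith
        have h1 : -t * a + t^2 * s ≤ -(a / (4*lmax)) := by
          rw [ht]
          have e1 : -(1 / (2*lmax)) * a + (1 / (2*lmax))^2 * s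
              = (s - 2 * a * lmax) / (4 * lmax^2) := by field_simp; ring
          rw [e1]
          rw [div_le_iff₀ (by positivity)]
          have : -(a / (4*lmax)) * (4 * lmax^2) = -(a * lmax) := by field_simp
          rw [this]
          nlinarith
        exact h1.trans (neg_le_neg (min_le_right _ _))
    rw [hset]
    calc μpr {ω | a ≤ (∑ i, Y i) ω}
        = ENNReal.ofReal (μpr {ω | a ≤ (∑ i, Y i) ω}).toReal :=
          (ENNReal.ofReal_toReal (measure_ne_top _ _)).symm
      _ ≤ ENNReal.ofReal (Real.exp (-(min (a^2 / (4 * L * ∑ i, (lam i)^2)) (a / (4 * lmax))))) := by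
          apply ENNReal.ofReal_le_ofReal
          refine hchern.trans ?_
          calc Real.exp (-t * a) * mgf (∑ i, Y i) μpr t
              ≤ Real.exp (-t * a) * Real.exp (t^2 * s) :=
                mul_le_mul_of_nonneg_left hmgfsum (Real.exp_pos _).le
            _ ≤ _ := hopt
end auxlemmas
end

section
/- For every integer L ≥ 1 and ε ∈ (0,1), the ε-quantile r of the chi-squared distribution with 2L degrees of freedom, i.e. the solution of P[χ²(2L) ≤ r] = ε, satisfies r ≤ 2L + 2 ln(1/(1−ε)) + 2√(2L ln(1/(1−ε))). -/
open MeasureTheory ProbabilityTheory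

private lemma key_log_ineq (L : ℕ) (hL : 1 ≤ L) (t : ℝ) (ht : 0 < t) :
    (L : ℝ) * Real.log ((2 * L + 2 * t + 2 * Real.sqrt (2 * L * t)) / (2 * L)) ≤
      Real.sqrt (2 * L * t) := by
  have hL0 : (0:ℝ) < L := by exact_mod_cast hL
  set s : ℝ := Real.sqrt (t / (2 * L)) with hs
  have hs0 : 0 < s := Real.sqrt_pos.mpr (by positivity)
  have hsq : s ^ 2 = t / (2 * L) := Real.sq_sqrt (by positivity)
  have ht' : t = 2 * L * s ^ 2 := by rw [hsq]; field_simp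
  have hsqrt : Real.sqrt (2 * L * t) = 2 * L * s := by
    rw [ht', show (2:ℝ) * L * (2 * L * s ^ 2) = (2 * L * s) ^ 2 by ring]
    exact Real.sqrt_sq (by positivity)
  have hBdiv : (2 * L + 2 * t + 2 * Real.sqrt (2 * L * t)) / (2 * L)
      = 1 + 2 * s + 2 * s ^ 2 := by
    rw [hsqrt, ht']; field_simp; ring
  rw [hBdiv, hsqrt]
  have hlog : Real.log (1 + 2 * s + 2 * s ^ 2) ≤ 2 * s := by
    rw [Real.log_le_iff_le_exp (by positivity)]
    calc 1 + 2 * s + 2 * s ^ 2 = 1 + 2 * s + (2 * s) ^ 2 / 2 := by ring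
      _ ≤ Real.exp (2 * s) := Real.quadratic_le_exp_of_nonneg (by positivity)
  calc (L : ℝ) * Real.log (1 + 2 * s + 2 * s ^ 2) ≤ (L : ℝ) * (2 * s) := by
        exact mul_le_mul_of_nonneg_left hlog hL0.le
    _ = 2 * L * s := by ring

/-- Laurent–Massart style quantile bound: for `L ≥ 1` and `ε ∈ (0,1)`, the `ε`-quantile `r` of
`χ²(2L)`, i.e. the solution of `P[χ²(2L) ≤ r] = ε`, satisfies
`r ≤ 2L + 2 ln(1/(1-ε)) + 2√(2L ln(1/(1-ε)))`. -/
theorem stmt_13 (L : ℕ) (hL : 1 ≤ L) (ε : ℝ) (hε : ε ∈ Set.Ioo (0:ℝ) 1) (r : ℝ)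
    (hr : chiSqMeasure (2 * L) (Set.Iic r) = ENNReal.ofReal ε) :
    r ≤ 2 * L + 2 * Real.log (1 / (1 - ε)) +
        2 * Real.sqrt (2 * L * Real.log (1 / (1 - ε))) := by
  obtain ⟨hε0, hε1⟩ := hε
  have h1ε : 0 < 1 - ε := by linarith
  have hL0 : (0:ℝ) < L := by exact_mod_cast hL
  set t : ℝ := Real.log (1 / (1 - ε)) with htdef
  have ht : 0 < t := Real.log_pos (by rw [lt_div_iff₀ h1ε]; linarith)
  have hexp : Real.exp (-t) = 1 - ε := by
    rw [← Real.log_inv, Real.exp_log (by positivity)]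
    simp
  set B : ℝ := 2 * L + 2 * t + 2 * Real.sqrt (2 * L * t) with hBdef
  have hsqrt_nonneg : 0 ≤ Real.sqrt (2 * L * t) := Real.sqrt_nonneg _
  have h2LB : 2 * (L:ℝ) < B := by simp only [hBdef]; nlinarith
  have hB0 : 0 < B := by linarith
  -- rewrite the measure as a Gamma measure with shape L
  have hcast : ((2 * L : ℕ) : ℝ) / 2 = (L : ℝ) := by push_cast; ring
  have hM : chiSqMeasure (2 * L) = gammaMeasure (L : ℝ) (1 / 2) := by
    rw [chiSqMeasure, hcast]
  set μ : Measure ℝ := gammaMeasure (L : ℝ) (1 / 2) with hμ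
  have hprob : IsProbabilityMeasure μ := isProbabilityMeasure_gammaMeasure hL0 (by norm_num)
  rw [hM] at hr
  -- rate of the tilted Gamma
  set c : ℝ := (L : ℝ) / B with hc
  have hc0 : 0 < c := by positivity
  have hlam0 : 0 < 1 / 2 - c := by
    rw [hc, sub_pos, div_lt_iff₀ hB0]; linarith
  -- the key constant inequality
  have hconst : ((1:ℝ)/2) ^ (L:ℝ) * Real.exp (-((1/2 - c) * B)) ≤ Real.exp (-t) * c ^ (L:ℝ) := by
    have hcB : c * B = (L : ℝ) := by rw [hc]; field_simp
    have hhalf : (1:ℝ)/2 = c * (B / (2 * L)) := by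
      rw [hc]; field_simp
    have hBL1 : (1:ℝ) < B / (2 * L) := by
      rw [lt_div_iff₀ (by positivity)]; linarith
    have hpow : (B / (2 * L)) ^ (L:ℝ) ≤ Real.exp (Real.sqrt (2 * L * t)) := by
      rw [← Real.exp_log (x := (B / (2 * L)) ^ (L:ℝ)) (by positivity),
        Real.log_rpow (by positivity)]
      exact Real.exp_le_exp.mpr (key_log_ineq L hL t ht)
    have hlamB : (1/2 - c) * B = t + Real.sqrt (2 * L * t) := by
      have : (1/2 - c) * B = B / 2 - c * B := by ring
      rw [this, hcB, hBdef]; ring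
    calc ((1:ℝ)/2) ^ (L:ℝ) * Real.exp (-((1/2 - c) * B))
        = c ^ (L:ℝ) * (B / (2 * L)) ^ (L:ℝ) * Real.exp (-((1/2 - c) * B)) := by
          rw [hhalf, Real.mul_rpow hc0.le (by positivity)]
      _ ≤ c ^ (L:ℝ) * Real.exp (Real.sqrt (2 * L * t)) * Real.exp (-((1/2 - c) * B)) := by
          have := mul_le_mul_of_nonneg_left hpow (Real.rpow_nonneg hc0.le (L:ℝ))
          exact mul_le_mul_of_nonneg_right this (Real.exp_nonneg _)
      _ = Real.exp (-t) * c ^ (L:ℝ) := by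
          rw [hlamB, mul_assoc, ← Real.exp_add]
          have harg : Real.sqrt (2 * L * t) + -(t + Real.sqrt (2 * L * t)) = -t := by ring
          rw [harg]; ring
  -- pointwise bound on the density
  have hpt : ∀ x ∈ Set.Ioi B, gammaPDF (L:ℝ) (1/2) x ≤
      ENNReal.ofReal (Real.exp (-t)) * gammaPDF (L:ℝ) c x := by
    intro x hx
    have hxB : B < x := hx
    have hx0 : 0 ≤ x := by linarith
    rw [gammaPDF_of_nonneg hx0, gammaPDF_of_nonneg hx0, ← ENNReal.ofReal_mul (by positivity)]
    apply ENNReal.ofReal_le_ofReal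
    have hΓ : 0 < Real.Gamma (L:ℝ) := Real.Gamma_pos_of_pos hL0
    have hxpow : 0 ≤ x ^ ((L:ℝ) - 1) := Real.rpow_nonneg hx0 _
    have hmain : ((1:ℝ)/2) ^ (L:ℝ) * Real.exp (-(1/2 * x)) ≤
        Real.exp (-t) * (c ^ (L:ℝ) * Real.exp (-(c * x))) := by
      have hsplit : Real.exp (-(1/2 * x)) = Real.exp (-((1/2 - c) * x)) * Real.exp (-(c * x)) := by
        rw [← Real.exp_add]; ring_nf
      have hmono : Real.exp (-((1/2 - c) * x)) ≤ Real.exp (-((1/2 - c) * B)) :=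
        Real.exp_le_exp.mpr (by nlinarith)
      calc ((1:ℝ)/2) ^ (L:ℝ) * Real.exp (-(1/2 * x))
          = ((1:ℝ)/2) ^ (L:ℝ) * Real.exp (-((1/2 - c) * x)) * Real.exp (-(c * x)) := by
            rw [hsplit]; ring
        _ ≤ ((1:ℝ)/2) ^ (L:ℝ) * Real.exp (-((1/2 - c) * B)) * Real.exp (-(c * x)) := by
            apply mul_le_mul_of_nonneg_right _ (Real.exp_nonneg _)
            exact mul_le_mul_of_nonneg_left hmono (by positivity)
        _ ≤ Real.exp (-t) * c ^ (L:ℝ) * Real.exp (-(c * x)) :=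
            mul_le_mul_of_nonneg_right hconst (Real.exp_nonneg _)
        _ = Real.exp (-t) * (c ^ (L:ℝ) * Real.exp (-(c * x))) := by ring
    calc ((1:ℝ)/2) ^ (L:ℝ) / Real.Gamma (L:ℝ) * x ^ ((L:ℝ) - 1) * Real.exp (-(1/2 * x))
        = (((1:ℝ)/2) ^ (L:ℝ) * Real.exp (-(1/2 * x))) * (x ^ ((L:ℝ) - 1) / Real.Gamma (L:ℝ)) := by
          ring
      _ ≤ (Real.exp (-t) * (c ^ (L:ℝ) * Real.exp (-(c * x)))) *
            (x ^ ((L:ℝ) - 1) / Real.Gamma (L:ℝ)) := by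
          apply mul_le_mul_of_nonneg_right hmain (by positivity)
      _ = Real.exp (-t) * (c ^ (L:ℝ) / Real.Gamma (L:ℝ) * x ^ ((L:ℝ) - 1) *
            Real.exp (-(c * x))) := by ring
  -- tail bound
  have htail : μ (Set.Ioi B) ≤ ENNReal.ofReal (1 - ε) := by
    rw [hμ, gammaMeasure, withDensity_apply _ measurableSet_Ioi]
    calc ∫⁻ x in Set.Ioi B, gammaPDF (L:ℝ) (1/2) x
        ≤ ∫⁻ x in Set.Ioi B, ENNReal.ofReal (Real.exp (-t)) * gammaPDF (L:ℝ) c x :=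
          setLIntegral_mono (measurable_const.mul
            (measurable_gammaPDFReal (L:ℝ) c).ennreal_ofReal) hpt
      _ = ENNReal.ofReal (Real.exp (-t)) * ∫⁻ x in Set.Ioi B, gammaPDF (L:ℝ) c x :=
          lintegral_const_mul _ ((measurable_gammaPDFReal (L:ℝ) c).ennreal_ofReal)
      _ ≤ ENNReal.ofReal (Real.exp (-t)) * ∫⁻ x, gammaPDF (L:ℝ) c x := by
          gcongr
          exact Measure.restrict_le_self
      _ = ENNReal.ofReal (1 - ε) := by
          rw [lintegral_gammaPDF_eq_one hL0 hc0, mul_one, hexp]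
  have hIicB : ENNReal.ofReal ε ≤ μ (Set.Iic B) := by
    have hcompl : μ (Set.Iic B) = 1 - μ (Set.Ioi B) := by
      rw [show Set.Iic B = (Set.Ioi B)ᶜ by simp, measure_compl measurableSet_Ioi
        (measure_ne_top μ _), measure_univ]
    rw [hcompl]
    calc ENNReal.ofReal ε = ENNReal.ofReal (1 - (1 - ε)) := by norm_num
      _ = 1 - ENNReal.ofReal (1 - ε) := by
          rw [ENNReal.ofReal_sub _ h1ε.le, ENNReal.ofReal_one]
      _ ≤ 1 - μ (Set.Ioi B) := tsub_le_tsub_left htail 1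
  -- conclude by contradiction
  by_contra hcon
  push_neg at hcon
  have hsplit : μ (Set.Iic r) = μ (Set.Iic B) + μ (Set.Ioc B r) := by
    rw [← Set.Iic_union_Ioc_eq_Iic hcon.le,
      measure_union (Set.Iic_disjoint_Ioc le_rfl) measurableSet_Ioc]
  have hpos : 0 < μ (Set.Ioc B r) := by
    rw [hμ, gammaMeasure, withDensity_apply _ measurableSet_Ioc]
    have hmeas : Measurable (gammaPDF (L:ℝ) (1/2)) :=
      (measurable_gammaPDFReal (L:ℝ) (1/2)).ennreal_ofReal
    rw [setLIntegral_pos_iff hmeas]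
    have hsub : Set.Ioc B r ⊆ Function.support (gammaPDF (L:ℝ) (1/2)) ∩ Set.Ioc B r := by
      intro x hx
      refine ⟨?_, hx⟩
      have hx0 : 0 < x := lt_trans hB0 hx.1
      simp only [Function.mem_support, gammaPDF, ne_eq, ENNReal.ofReal_eq_zero, not_le]
      exact gammaPDFReal_pos hL0 (by norm_num) hx0
    calc (0:ENNReal) < volume (Set.Ioc B r) := by
          rw [Real.volume_Ioc]
          exact ENNReal.ofReal_pos.mpr (by linarith)
      _ ≤ volume (Function.support (gammaPDF (L:ℝ) (1/2)) ∩ Set.Ioc B r) :=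
          measure_mono hsub
  have : ENNReal.ofReal ε < ENNReal.ofReal ε := by
    calc ENNReal.ofReal ε < ENNReal.ofReal ε + μ (Set.Ioc B r) :=
          ENNReal.lt_add_right ENNReal.ofReal_ne_top hpos.ne'
      _ ≤ μ (Set.Iic B) + μ (Set.Ioc B r) := by gcongr
      _ = μ (Set.Iic r) := hsplit.symm
      _ = ENNReal.ofReal ε := hr
  exact lt_irrefl _ this
end
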